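/- Let G = (V, E) be a finite undirected multigraph (loops allowed), d ≥ 1 and s ≥ 0 integers. Then it is possible to remove at most s edges from G and orient the remaining edges so that every vertex has outdegree at most d, if and only if for every subset X of edges, d·|Γ(X)| + s ≥ |X|, where Γ(X) denotes the set of vertices incident to at least one edge of X. -/

import Mathlib

/-- A finite undirected multigraph is modelled by an edge index type `E` with two
endpoint maps `h1 h2 : E → V` (parallel edges and loops allowed).
An orientation `o : E → Bool` directs edge `e` out of `h1 e` if `o e = true`,
and out of `h2 e` otherwise.

The graph is (d,s)-suitable (one can delete at most s edges and orient the rest so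
that every vertex has outdegree ≤ d) iff for every subset X of edges,
d·|Γ(X)| + s ≥ |X|, where Γ(X) is the set of endpoints of edges of X. -/
theorem stmt_0 {V E : Type*} [Fintype V] [Fintype E] [DecidableEq V] [DecidableEq E]
    (h1 h2 : E → V) (d s : ℕ) (hd : 1 ≤ d) :
    (∃ (R : Finset E) (o : E → Bool), R.card ≤ s ∧ ∀ v : V,
        (Finset.univ.filter
          (fun e : E => e ∉ R ∧ (if o e then h1 e else h2 e) = v)).card ≤ d) ↔
      ∀ X : Finset E, X.card ≤ d * (X.image h1 ∪ X.image h2).card + s := by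
  constructor
  · rintro ⟨R, o, hR, ho⟩ X
    classical
    set w : E → V := fun e => if o e then h1 e else h2 e with hw
    have hsplit : X.card = (X \ R).card + (X ∩ R).card := by
      rw [Finset.card_sdiff_add_card_inter]
    have h2' : (X ∩ R).card ≤ s :=
      le_trans (Finset.card_le_card (Finset.inter_subset_right)) hR
    have h1' : (X \ R).card ≤ d * (X.image h1 ∪ X.image h2).card := by
      apply Finset.card_le_mul_card_image_of_maps_to (f := w)
      · intro e he
        rw [Finset.mem_union]
        by_cases hoe : o e
        · exact Or.inl (by
            simpa [hw, hoe] using Finset.mem_image_of_mem h1 (Finset.mem_sdiff.mp he).1)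
        · exact Or.inr (by
            simpa [hw, hoe] using Finset.mem_image_of_mem h2 (Finset.mem_sdiff.mp he).1)
      · intro v _
        refine le_trans (Finset.card_le_card ?_) (ho v)
        intro e he
        simp only [Finset.mem_filter, Finset.mem_sdiff] at he ⊢
        exact ⟨Finset.mem_univ _, he.1.2, he.2⟩
    omega
  · intro hX
    classical
    set α := (V × Fin d) ⊕ Fin s with hα
    set t : E → Finset α := fun e =>
      ((({h1 e, h2 e} : Finset V) ×ˢ (Finset.univ : Finset (Fin d))).image Sum.inl)
        ∪ ((Finset.univ : Finset (Fin s)).image Sum.inr) with ht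
    have hall : ∀ X : Finset E, X.card ≤ (X.biUnion t).card := by
      intro X
      rcases X.eq_empty_or_nonempty with rfl | ⟨e0, he0⟩
      · simp
      · have hsub : (((X.image h1 ∪ X.image h2) ×ˢ (Finset.univ : Finset (Fin d))).image Sum.inl)
            ∪ ((Finset.univ : Finset (Fin s)).image Sum.inr) ⊆ X.biUnion t := by
          intro a ha
          rw [Finset.mem_union] at ha
          rcases ha with ha | ha
          · obtain ⟨⟨v, i⟩, hvi, rfl⟩ := Finset.mem_image.mp ha
            rw [Finset.mem_product] at hvi
            rcases Finset.mem_union.mp hvi.1 with hv | hv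
            · obtain ⟨e, he, rfl⟩ := Finset.mem_image.mp hv
              exact Finset.mem_biUnion.mpr ⟨e, he, by simp [ht]⟩
            · obtain ⟨e, he, rfl⟩ := Finset.mem_image.mp hv
              exact Finset.mem_biUnion.mpr ⟨e, he, by simp [ht]⟩
          · obtain ⟨j, _, rfl⟩ := Finset.mem_image.mp ha
            exact Finset.mem_biUnion.mpr ⟨e0, he0, by simp [ht]⟩
        have hcard : ((((X.image h1 ∪ X.image h2) ×ˢ (Finset.univ : Finset (Fin d))).image Sum.inl)
            ∪ ((Finset.univ : Finset (Fin s)).image Sum.inr)).card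
            = d * (X.image h1 ∪ X.image h2).card + s := by
          rw [Finset.card_union_of_disjoint]
          · rw [Finset.card_image_of_injective _ Sum.inl_injective,
              Finset.card_image_of_injective _ Sum.inr_injective,
              Finset.card_product]
            simp [mul_comm]
          · simp [Finset.disjoint_left]
        calc X.card ≤ d * (X.image h1 ∪ X.image h2).card + s := hX X
          _ = _ := hcard.symm
          _ ≤ _ := Finset.card_le_card hsub
    obtain ⟨f, hfinj, hft⟩ := (Finset.all_card_le_biUnion_card_iff_exists_injective t).mp hall
    set R : Finset E := Finset.univ.filter (fun e => (f e).isRight) with hRdef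
    set o : E → Bool := fun e => match f e with
      | .inl p => decide (p.1 = h1 e)
      | .inr _ => true with hodef
    refine ⟨R, o, ?_, ?_⟩
    · have hcardR : R.card ≤ ((Finset.univ : Finset (Fin s)).image Sum.inr : Finset α).card := by
        apply Finset.card_le_card_of_injOn f
        · intro e he
          rw [hRdef, Finset.mem_coe, Finset.mem_filter] at he
          match hfe : f e with
          | .inl p => rw [hfe] at he; simp at he
          | .inr j => exact Finset.mem_image.mpr ⟨j, Finset.mem_univ _, rfl⟩
        · exact fun a _ b _ h => hfinj h
      simpa [Finset.card_image_of_injective _ Sum.inr_injective] using hcardR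
    · intro v
      have hout : (Finset.univ.filter
          (fun e : E => e ∉ R ∧ (if o e then h1 e else h2 e) = v)).card
          ≤ ((({v} : Finset V) ×ˢ (Finset.univ : Finset (Fin d))).image Sum.inl : Finset α).card := by
        apply Finset.card_le_card_of_injOn f
        · intro e he
          rw [Finset.mem_coe, Finset.mem_filter] at he
          obtain ⟨-, heR, hev⟩ := he
          rw [hRdef, Finset.mem_filter] at heR
          match hfe : f e with
          | .inr j => exact absurd ⟨Finset.mem_univ _, by rw [hfe]; rfl⟩ heR
          | .inl p =>
            have hmem := hft e
            rw [ht, hfe] at hmem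
            simp only [Finset.mem_union, Finset.mem_image] at hmem
            rcases hmem with ⟨⟨v', i⟩, hvi, heq⟩ | ⟨j, _, heq⟩
            · obtain rfl := Sum.inl_injective heq
              rw [Finset.mem_product, Finset.mem_insert, Finset.mem_singleton] at hvi
              have hoe : o e = decide (v' = h1 e) := by rw [hodef]; simp only; rw [hfe]
              have hv' : v' = v := by
                by_cases hcase : v' = h1 e
                · rw [hoe] at hev; simp [hcase] at hev; rw [hcase, hev]
                · rw [hoe] at hev; simp [hcase] at hev
                  rcases hvi.1 with h | h
                  · exact absurd h hcase
                  · exact h.trans hev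
              refine Finset.mem_image.mpr ⟨(v', i), ?_, rfl⟩
              rw [Finset.mem_product]
              exact ⟨Finset.mem_singleton.mpr hv', Finset.mem_univ _⟩
            · exact absurd heq (by simp)
        · exact fun a _ b _ h => hfinj h
      calc _ ≤ _ := hout
        _ = d := by
          rw [Finset.card_image_of_injective _ Sum.inl_injective, Finset.card_product]
          simp
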